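/- Suppose F = (1/n)∑f_i satisfies the Polyak-Łojasiewicz condition with parameter μ, F and each f_i have L-Lipschitz gradients, and gradients are bounded by G. Then one full random-shuffle epoch with step size γ satisfies F(x_n) - F* ≤ (1 - 2nμγ + 2L²n²γ²)(F(x_0) - F*) - γ⟨∇F(x_0), R⟩ + Lγ²‖R‖², where R = ∑_{i=1}^n[∇f_{σ(i)}(x_{i-1}) - ∇f_{σ(i)}(x_0)] and x_n = x_0 - γ(n∇F(x_0) + R). -/

import Mathlib

open Finset RealInnerProductSpace

lemma descent {d : ℕ} (L : ℝ) (hL : 0 ≤ L)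
    (F : EuclideanSpace ℝ (Fin d) → ℝ) (gF : EuclideanSpace ℝ (Fin d) → EuclideanSpace ℝ (Fin d))
    (hgrad : ∀ x, HasGradientAt F (gF x) x)
    (hlip : ∀ x y, ‖gF x - gF y‖ ≤ L * ‖x - y‖)
    (x v : EuclideanSpace ℝ (Fin d)) :
    F (x + v) ≤ F x + ⟪gF x, v⟫ + L / 2 * ‖v‖ ^ 2 := by
  set ψ : ℝ → ℝ := fun t => F (x + t • v) - t * ⟪gF x, v⟫ - L / 2 * t ^ 2 * ‖v‖ ^ 2 with hψ
  have hderiv : ∀ t : ℝ, HasDerivAt ψ (⟪gF (x + t • v), v⟫ - ⟪gF x, v⟫ - L * t * ‖v‖ ^ 2) t := by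
    intro t
    have hline : HasDerivAt (fun t : ℝ => x + t • v) v t := by
      simpa using ((hasDerivAt_id t).smul_const v).const_add x
    have hF : HasDerivAt (fun t : ℝ => F (x + t • v)) ⟪gF (x + t • v), v⟫ t := by
      have := ((hgrad (x + t • v)).hasFDerivAt).comp_hasDerivAt t hline
      simpa [InnerProductSpace.toDual_apply_apply, Function.comp_def] using this
    have h2 : HasDerivAt (fun t : ℝ => t * ⟪gF x, v⟫) ⟪gF x, v⟫ t := by
      simpa using (hasDerivAt_id t).mul_const (⟪gF x, v⟫)
    have h3 : HasDerivAt (fun t : ℝ => L / 2 * t ^ 2 * ‖v‖ ^ 2) (L * t * ‖v‖ ^ 2) t := by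
      have := (hasDerivAt_pow 2 t).const_mul (L / 2)
      have := this.mul_const (‖v‖ ^ 2)
      exact this.congr_deriv (by ring)
    exact (hF.sub h2).sub h3
  have hanti : AntitoneOn ψ (Set.Icc (0:ℝ) 1) := by
    apply antitoneOn_of_deriv_nonpos (convex_Icc 0 1)
    · exact fun t _ => ((hderiv t).continuousAt).continuousWithinAt
    · intro t ht
      exact ((hderiv t).differentiableAt).differentiableWithinAt
    · intro t ht
      rw [interior_Icc] at ht
      rw [(hderiv t).deriv]
      have hcs : ⟪gF (x + t • v) - gF x, v⟫ ≤ ‖gF (x + t • v) - gF x‖ * ‖v‖ :=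
        real_inner_le_norm _ _
      have hl : ‖gF (x + t • v) - gF x‖ ≤ L * (t * ‖v‖) := by
        have := hlip (x + t • v) x
        simpa [norm_smul, abs_of_pos ht.1, mul_assoc] using this
      have h0 : ⟪gF (x + t • v) - gF x, v⟫ = ⟪gF (x + t • v), v⟫ - ⟪gF x, v⟫ :=
        inner_sub_left _ _ _
      nlinarith [norm_nonneg v, ht.1.le, mul_le_mul_of_nonneg_right hl (norm_nonneg v)]
  have := hanti (Set.left_mem_Icc.2 zero_le_one) (Set.right_mem_Icc.2 zero_le_one) zero_le_one
  simp only [hψ] at this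
  simp only [one_smul, zero_smul, add_zero, one_pow, zero_pow, one_mul, zero_mul, mul_zero,
    mul_one, sub_zero] at this
  linarith

set_option maxHeartbeats 1000000 in
theorem stmt19 {d n : ℕ} (hn : 0 < n) (μ L G γ Fstar : ℝ)
    (hμ : 0 < μ) (hL : 0 < L) (hG : 0 ≤ G) (hγ : 0 ≤ γ)
    (F : EuclideanSpace ℝ (Fin d) → ℝ)
    (gF : EuclideanSpace ℝ (Fin d) → EuclideanSpace ℝ (Fin d))
    (g : Fin n → EuclideanSpace ℝ (Fin d) → EuclideanSpace ℝ (Fin d))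
    (hgrad : ∀ x, HasGradientAt F (gF x) x)
    (hlipF : LipschitzWith (Real.toNNReal L) gF)
    (havg : ∀ x, gF x = (n : ℝ)⁻¹ • ∑ i, g i x)
    (hLip : ∀ i x y, ‖g i x - g i y‖ ≤ L * ‖x - y‖)
    (hbound : ∀ i x, ‖g i x‖ ≤ G)
    (hPL : ∀ x, μ * (F x - Fstar) ≤ (1 / 2) * ‖gF x‖ ^ 2)
    (hmin : ∀ x, Fstar ≤ F x)
    (σ : Equiv.Perm (Fin n))
    (x : ℕ → EuclideanSpace ℝ (Fin d))
    (hupd : ∀ k : Fin n, x ((k : ℕ) + 1) = x k - γ • g (σ k) (x k))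
    (R : EuclideanSpace ℝ (Fin d))
    (hR : R = ∑ i : Fin n, (g (σ i) (x i) - g (σ i) (x 0)))
    (hxn : x n = x 0 - γ • ((n : ℝ) • gF (x 0) + R)) :
    F (x n) - Fstar
      ≤ (1 - 2 * (n : ℝ) * μ * γ + 2 * L ^ 2 * (n : ℝ) ^ 2 * γ ^ 2) * (F (x 0) - Fstar)
        - γ * ⟪gF (x 0), R⟫ + L * γ ^ 2 * ‖R‖ ^ 2 := by
  have hlip : ∀ a b, ‖gF a - gF b‖ ≤ L * ‖a - b‖ := by
    intro a b
    have := hlipF.dist_le_mul a b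
    simpa [dist_eq_norm, Real.coe_toNNReal L hL.le] using this
  have hdes := descent L hL.le F gF hgrad hlip
  -- bound ‖gF x‖² ≤ 2L(F x - Fstar)
  have hsq : ∀ y, ‖gF y‖ ^ 2 ≤ 2 * L * (F y - Fstar) := by
    intro y
    have h := hdes y (-(L⁻¹ • gF y))
    have hval : ⟪gF y, -(L⁻¹ • gF y)⟫ = -(L⁻¹ * ‖gF y‖ ^ 2) := by
      rw [inner_neg_right, real_inner_smul_right, real_inner_self_eq_norm_sq]
    have hnrm : ‖-(L⁻¹ • gF y)‖ ^ 2 = L⁻¹ ^ 2 * ‖gF y‖ ^ 2 := by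
      rw [norm_neg, norm_smul, norm_inv, Real.norm_eq_abs, abs_of_pos hL]
      ring
    have hm := hmin (y + -(L⁻¹ • gF y))
    rw [hval, hnrm] at h
    have hLne : L ≠ 0 := hL.ne'
    have : Fstar ≤ F y - L⁻¹ * ‖gF y‖ ^ 2 + L / 2 * (L⁻¹ ^ 2 * ‖gF y‖ ^ 2) := le_trans hm h
    have key : ‖gF y‖ ^ 2 / (2 * L) ≤ F y - Fstar := by
      have e : L⁻¹ * ‖gF y‖ ^ 2 - L / 2 * (L⁻¹ ^ 2 * ‖gF y‖ ^ 2) = ‖gF y‖ ^ 2 / (2 * L) := by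
        field_simp
        ring
      linarith
    rw [div_le_iff₀ (by positivity)] at key
    nlinarith [key]
  -- descent at the epoch endpoint
  set v : EuclideanSpace ℝ (Fin d) := -(γ • ((n : ℝ) • gF (x 0) + R)) with hv
  have hxn' : x n = x 0 + v := by rw [hxn, hv]; abel
  have h := hdes (x 0) v
  rw [← hxn'] at h
  have hval : ⟪gF (x 0), v⟫ = -(γ * (n : ℝ) * ‖gF (x 0)‖ ^ 2) - γ * ⟪gF (x 0), R⟫ := by
    rw [hv, inner_neg_right, real_inner_smul_right, inner_add_right, real_inner_smul_right,
      real_inner_self_eq_norm_sq]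
    ring
  have hnv : ‖v‖ ^ 2 ≤ 2 * ((n:ℝ) * γ) ^ 2 * ‖gF (x 0)‖ ^ 2 + 2 * γ ^ 2 * ‖R‖ ^ 2 := by
    have h1 : ‖v‖ = γ * ‖(n : ℝ) • gF (x 0) + R‖ := by
      rw [hv, norm_neg, norm_smul, Real.norm_eq_abs, abs_of_nonneg hγ]
    have h2 : ‖(n : ℝ) • gF (x 0) + R‖ ^ 2 ≤ 2 * ‖(n : ℝ) • gF (x 0)‖ ^ 2 + 2 * ‖R‖ ^ 2 := by
      have t1 := pow_le_pow_left₀ (norm_nonneg ((n : ℝ) • gF (x 0) + R))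
        (norm_add_le ((n : ℝ) • gF (x 0)) R) 2
      nlinarith [t1, sq_nonneg (‖(n : ℝ) • gF (x 0)‖ - ‖R‖)]
    have h3 : ‖(n : ℝ) • gF (x 0)‖ = (n : ℝ) * ‖gF (x 0)‖ := by
      rw [norm_smul, Real.norm_natCast]
    rw [h1]
    rw [h3] at h2
    nlinarith [sq_nonneg γ, sq_nonneg (‖(n : ℝ) • gF (x 0) + R‖)]
  have hPL0 := hPL (x 0)
  have hsq0 := hsq (x 0)
  have hm0 : 0 ≤ F (x 0) - Fstar := sub_nonneg.2 (hmin (x 0))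
  rw [hval] at h
  have e1 : L / 2 * ‖v‖ ^ 2 ≤ L * ((n : ℝ) * γ) ^ 2 * ‖gF (x 0)‖ ^ 2 + L * γ ^ 2 * ‖R‖ ^ 2 := by
    nlinarith [mul_le_mul_of_nonneg_left hnv (by positivity : (0:ℝ) ≤ L / 2)]
  have e2 : 2 * (n : ℝ) * μ * γ * (F (x 0) - Fstar) ≤ γ * (n : ℝ) * ‖gF (x 0)‖ ^ 2 := by
    nlinarith [mul_le_mul_of_nonneg_left hPL0 (by positivity : (0:ℝ) ≤ 2 * (n : ℝ) * γ)]
  have e3 : L * ((n : ℝ) * γ) ^ 2 * ‖gF (x 0)‖ ^ 2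
      ≤ 2 * L ^ 2 * (n : ℝ) ^ 2 * γ ^ 2 * (F (x 0) - Fstar) := by
    nlinarith [mul_le_mul_of_nonneg_left hsq0 (by positivity : (0:ℝ) ≤ L * ((n : ℝ) * γ) ^ 2)]
  linarith [h, e1, e2, e3]
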